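/- Let F₁ : ℝ → ℝ be a differentiable map with F₁(χ̇*) = −χ̇* at some χ̇* < 0 and define h(χ̇) = −F₁(χ̇)/χ̇ on a neighborhood of χ̇* where χ̇ ≠ 0. If h'(χ̇*) ≠ 0, then h is a local diffeomorphism at χ̇*, h(χ̇*) = 1, and the conjugated map F^v(κ) = h(κ · h⁻¹(κ)) has fixed point κ* = 1 with derivative DF^v(1) = −DF₁(χ̇*). In particular, if −1 < DF₁(χ̇*) < 1 then κ* = 1 is an asymptotically stable fixed point of F^v. -/

import Mathlib

open Filter
open scoped Topology

/-- Proposition 2 (Vertical stability): conjugating the touchdown velocity map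
through the velocity-gain coordinate `h(χ̇) = -F₁(χ̇)/χ̇` yields a return map
`F^v(κ) = h(κ·h⁻¹(κ))` with fixed point `κ* = 1` and derivative `-DF₁(χ̇*)`;
in particular `κ* = 1` is asymptotically stable when `-1 < DF₁(χ̇*) < 1`. -/
theorem stmt_3 (F₁ : ℝ → ℝ) (χs : ℝ) (hχs : χs < 0)
    (hF₁ : ContDiffAt ℝ 1 F₁ χs) (hfix : F₁ χs = -χs)
    (h : ℝ → ℝ) (hh : ∀ y : ℝ, y ≠ 0 → h y = -F₁ y / y)
    (hder : deriv h χs ≠ 0) :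
    h χs = 1 ∧
    ∃ g : ℝ → ℝ, ContinuousAt g 1 ∧ g 1 = χs ∧
      (∀ᶠ κ in nhds (1 : ℝ), h (g κ) = κ) ∧
      (∀ᶠ y in nhds χs, g (h y) = y) ∧
      ∀ Fv : ℝ → ℝ, (∀ κ : ℝ, Fv κ = h (κ * g κ)) →
        Fv 1 = 1 ∧ HasDerivAt Fv (-(deriv F₁ χs)) 1 ∧
        (-1 < deriv F₁ χs → deriv F₁ χs < 1 → |(-(deriv F₁ χs))| < 1) := by
  have hχ0 : χs ≠ 0 := ne_of_lt hχs
  have hχ1 : h χs = 1 := by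
    rw [hh χs hχ0, hfix]; field_simp
  -- F₁ has a derivative
  have hF₁d : HasDerivAt F₁ (deriv F₁ χs) χs :=
    (hF₁.differentiableAt one_ne_zero).hasDerivAt
  -- h equals -F₁/· near χs
  have hEq : h =ᶠ[𝓝 χs] fun y => -F₁ y / y := by
    filter_upwards [isOpen_ne.mem_nhds hχ0] with y hy using hh y hy
  -- h is C¹ near χs
  have hhC : ContDiffAt ℝ 1 h χs := by
    have : ContDiffAt ℝ 1 (fun y => -F₁ y / y) χs :=
      (hF₁.neg.div contDiffAt_id hχ0)
    exact this.congr_of_eventuallyEq hEq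
  have hstrict : HasStrictDerivAt h (deriv h χs) χs :=
    hhC.hasStrictDerivAt one_ne_zero
  -- value of deriv h χs
  have hq : HasDerivAt (fun y => -F₁ y / y)
      (((-(deriv F₁ χs)) * χs - (-F₁ χs) * 1) / χs ^ 2) χs :=
    hF₁d.neg.div (hasDerivAt_id χs) hχ0
  have hderval : deriv h χs = -(deriv F₁ χs + 1) / χs := by
    have := (hq.congr_of_eventuallyEq hEq).deriv
    rw [this, hfix]
    field_simp
    ring
  -- local inverse
  set g : ℝ → ℝ := hstrict.localInverse h (deriv h χs) χs hder with hg
  have hcont : ContinuousAt g (h χs) :=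
    (hstrict.hasStrictFDerivAt_equiv hder).localInverse_continuousAt
  have hg1 : g (h χs) = χs :=
    (hstrict.hasStrictFDerivAt_equiv hder).localInverse_apply_image
  have hright : ∀ᶠ κ in 𝓝 (h χs), h (g κ) = κ :=
    (hstrict.hasStrictFDerivAt_equiv hder).eventually_right_inverse
  have hleft : ∀ᶠ y in 𝓝 χs, g (h y) = y :=
    (hstrict.hasStrictFDerivAt_equiv hder).eventually_left_inverse
  have hginv : HasStrictDerivAt g (deriv h χs)⁻¹ (h χs) := hstrict.to_localInverse hder
  refine ⟨hχ1, g, ?_, ?_, ?_, hleft, ?_⟩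
  · rwa [hχ1] at hcont
  · rwa [hχ1] at hg1
  · rwa [hχ1] at hright
  intro Fv hFv
  have hg1' : g 1 = χs := by rwa [hχ1] at hg1
  constructor
  · rw [hFv, one_mul, hg1', hχ1]
  constructor
  · -- derivative
    have hgd : HasDerivAt g (deriv h χs)⁻¹ 1 := by
      have := hginv.hasDerivAt; rwa [hχ1] at this
    have hφ : HasDerivAt (fun κ => κ * g κ)
        (1 * g 1 + 1 * (deriv h χs)⁻¹) 1 :=
      (hasDerivAt_id 1).mul hgd
    have hhd : HasDerivAt h (deriv h χs) ((fun κ => κ * g κ) 1) := by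
      simpa [hg1'] using hstrict.hasDerivAt
    have hcomp := hhd.comp 1 hφ
    have hval : deriv h χs * (1 * g 1 + 1 * (deriv h χs)⁻¹) = -(deriv F₁ χs) := by
      rw [hg1', one_mul, one_mul, mul_add, mul_inv_cancel₀ hder, hderval]
      field_simp
      ring
    have : HasDerivAt (fun κ => h (κ * g κ)) (-(deriv F₁ χs)) 1 := by
      rwa [hval] at hcomp
    exact this.congr_of_eventuallyEq (Filter.Eventually.of_forall hFv)
  · intro h1 h2
    rw [abs_lt]; constructor <;> linarith
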